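/- There is no anti-knight Latin square of order 3, i.e., no 3×3 Latin square in which any two cells a knight's move apart contain distinct values. -/
import Mathlib


/-- An `n × n` Latin square with entries in `{1, …, n}`. -/
def latin (n : ℕ) (M : Fin n → Fin n → ℕ) : Prop :=
  (∀ i j, M i j ∈ Finset.Icc 1 n) ∧
  (∀ i, Function.Injective fun j => M i j) ∧
  (∀ j, Function.Injective fun i => M i j)

/-- Two cells are orthogonally adjacent. -/
def orthAdj (n : ℕ) (p q : Fin n × Fin n) : Prop :=
  (p.1 = q.1 ∧ (p.2.val + 1 = q.2.val ∨ q.2.val + 1 = p.2.val)) ∨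
  (p.2 = q.2 ∧ (p.1.val + 1 = q.1.val ∨ q.1.val + 1 = p.1.val))

/-- Two cells are a king's move apart (orthogonally or diagonally adjacent). -/
def kingAdj (n : ℕ) (p q : Fin n × Fin n) : Prop :=
  p ≠ q ∧ ((p.1.val : ℤ) - q.1.val).natAbs ≤ 1 ∧ ((p.2.val : ℤ) - q.2.val).natAbs ≤ 1

/-- Two cells are a knight's move apart. -/
def knightAdj (n : ℕ) (p q : Fin n × Fin n) : Prop :=
  (((p.1.val : ℤ) - q.1.val).natAbs = 1 ∧ ((p.2.val : ℤ) - q.2.val).natAbs = 2) ∨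
  (((p.1.val : ℤ) - q.1.val).natAbs = 2 ∧ ((p.2.val : ℤ) - q.2.val).natAbs = 1)

/-- Two cells are a bishop's move apart: on a common diagonal, at nonzero distance. -/
def bishopMove (n : ℕ) (p q : Fin n × Fin n) : Prop :=
  ((p.1.val : ℤ) - q.1.val).natAbs = ((p.2.val : ℤ) - q.2.val).natAbs ∧ p.1 ≠ q.1

/-- Two cells are orthogonally adjacent on the torus (wrapping around). -/
def torAdj (n : ℕ) (p q : Fin n × Fin n) : Prop :=
  p ≠ q ∧
    ((p.1 = q.1 ∧ ((p.2.val + 1) % n = q.2.val ∨ (q.2.val + 1) % n = p.2.val)) ∨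
     (p.2 = q.2 ∧ ((p.1.val + 1) % n = q.1.val ∨ (q.1.val + 1) % n = p.1.val)))

/-- Two values differ by exactly 1. -/
def diffOne (a b : ℕ) : Prop := ((a : ℤ) - (b : ℤ)).natAbs = 1

/-- There is no anti-knight Latin square of order 3. -/
theorem stmt13 :
    ¬ ∃ M : Fin 3 → Fin 3 → ℕ, latin 3 M ∧
      ∀ p q : Fin 3 × Fin 3, knightAdj 3 p q → M p.1 p.2 ≠ M q.1 q.2 := by
  rintro ⟨M, ⟨hb, hr, hc⟩, hk⟩
  have hB : ∀ i j, 1 ≤ M i j ∧ M i j ≤ 3 := fun i j => Finset.mem_Icc.mp (hb i j)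
  have R : ∀ i (j j' : Fin 3), j ≠ j' → M i j ≠ M i j' := by
    intro i j j' hne h; exact hne (hr i h)
  have C : ∀ j (i i' : Fin 3), i ≠ i' → M i j ≠ M i' j := by
    intro j i i' hne h; exact hne (hc j h)
  have k1 := hk (0,0) (1,2) (by unfold knightAdj; decide)
  have k2 := hk (0,0) (2,1) (by unfold knightAdj; decide)
  have k3 := hk (0,1) (2,0) (by unfold knightAdj; decide)
  have k4 := hk (0,1) (2,2) (by unfold knightAdj; decide)
  have k5 := hk (0,2) (1,0) (by unfold knightAdj; decide)
  have k6 := hk (0,2) (2,1) (by unfold knightAdj; decide)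
  have k7 := hk (1,0) (2,2) (by unfold knightAdj; decide)
  have k8 := hk (1,2) (2,0) (by unfold knightAdj; decide)
  simp only at k1 k2 k3 k4 k5 k6 k7 k8
  have h00 := hB 0 0; have h01 := hB 0 1; have h02 := hB 0 2
  have h10 := hB 1 0; have h11 := hB 1 1; have h12 := hB 1 2
  have h20 := hB 2 0; have h21 := hB 2 1; have h22 := hB 2 2
  have r001 := R 0 0 1 (by decide); have r002 := R 0 0 2 (by decide); have r012 := R 0 1 2 (by decide)
  have r101 := R 1 0 1 (by decide); have r102 := R 1 0 2 (by decide); have r112 := R 1 1 2 (by decide)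
  have r201 := R 2 0 1 (by decide); have r202 := R 2 0 2 (by decide); have r212 := R 2 1 2 (by decide)
  have c001 := C 0 0 1 (by decide); have c002 := C 0 0 2 (by decide); have c012 := C 0 1 2 (by decide)
  have c101 := C 1 0 1 (by decide); have c102 := C 1 0 2 (by decide); have c112 := C 1 1 2 (by decide)
  have c201 := C 2 0 1 (by decide); have c202 := C 2 0 2 (by decide); have c212 := C 2 1 2 (by decide)
  omega
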